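/- Let 𝒞 be a collection of cells over a field K. Then the lattice ideal L_𝒞 is a minimal prime of the adjacent 2-minor ideal I_adj(𝒞) in S_𝒞 (that is, L_𝒞 is a prime ideal containing I_adj(𝒞), and no prime ideal strictly between I_adj(𝒞) and L_𝒞 exists). -/

import Mathlib

open MvPolynomial

/-- The vertex set of the cell with lower-left corner `a`. -/
def cellVerts (a : ℤ × ℤ) : Finset (ℤ × ℤ) :=
  {a, a + (1, 0), a + (0, 1), a + (1, 1)}

/-- The edges of the cell with lower-left corner `a`, recorded as ordered pairs
of their two endpoints: `{a,c}`, `{c,b}`, `{b,d}`, `{a,d}` where `b = a+(1,1)`,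
`c = a+(0,1)`, `d = a+(1,0)`. -/
def cellEdges (a : ℤ × ℤ) : Finset ((ℤ × ℤ) × (ℤ × ℤ)) :=
  {(a, a + (0, 1)), (a + (0, 1), a + (1, 1)), (a + (1, 1), a + (1, 0)), (a, a + (1, 0))}

/-- The vertex set of a collection of cells; cells are recorded by their
lower-left corners. -/
def verts (C : Finset (ℤ × ℤ)) : Finset (ℤ × ℤ) :=
  C.biUnion cellVerts

lemma mem_verts {C : Finset (ℤ × ℤ)} {a v : ℤ × ℤ} (ha : a ∈ C)
    (hv : v ∈ cellVerts a) : v ∈ verts C :=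
  Finset.mem_biUnion.mpr ⟨a, ha, hv⟩

lemma corner_mem00 (a : ℤ × ℤ) : a ∈ cellVerts a := by simp [cellVerts]
lemma corner_mem10 (a : ℤ × ℤ) : a + (1, 0) ∈ cellVerts a := by simp [cellVerts]
lemma corner_mem01 (a : ℤ × ℤ) : a + (0, 1) ∈ cellVerts a := by simp [cellVerts]
lemma corner_mem11 (a : ℤ × ℤ) : a + (1, 1) ∈ cellVerts a := by simp [cellVerts]

/-- The adjacent 2-minor ideal `I_adj(𝒞)` of a collection of cells, inside the
polynomial ring `S_𝒞 = K[x_v : v ∈ V(𝒞)]`. -/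
noncomputable def adjIdeal (K : Type*) [Field K] (C : Finset (ℤ × ℤ)) :
    Ideal (MvPolynomial {v // v ∈ verts C} K) :=
  Ideal.span {f | ∃ a, ∃ ha : a ∈ C,
    f = X ⟨a, mem_verts ha (corner_mem00 a)⟩ *
          X ⟨a + (1, 1), mem_verts ha (corner_mem11 a)⟩ -
        X ⟨a + (0, 1), mem_verts ha (corner_mem01 a)⟩ *
          X ⟨a + (1, 0), mem_verts ha (corner_mem10 a)⟩}

/-- The vector `v_C = e_a + e_b - e_c - e_d ∈ ℤ^{V(𝒞)}` attached to the cell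
with lower-left corner `a` (so `b = a+(1,1)`, `c = a+(0,1)`, `d = a+(1,0)`). -/
def cellVec (C : Finset (ℤ × ℤ)) (a : ℤ × ℤ) : {v // v ∈ verts C} → ℤ :=
  fun w => ((if w.1 = a then 1 else 0) + (if w.1 = a + (1, 1) then 1 else 0)
    - (if w.1 = a + (0, 1) then 1 else 0)) - (if w.1 = a + (1, 0) then 1 else 0)

/-- The lattice `Λ_𝒟 ⊆ ℤ^{V(𝒞)}` generated by the vectors `v_C`, `C ∈ 𝒟`,
for a subcollection `𝒟` of `𝒞`. -/
def cellLattice (C : Finset (ℤ × ℤ)) (D : Set (ℤ × ℤ)) :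
    AddSubgroup ({v // v ∈ verts C} → ℤ) :=
  AddSubgroup.closure {g | ∃ a ∈ D, g = cellVec C a}

/-- The lattice ideal `L_𝒟 ⊆ S_𝒞` of a subcollection `𝒟` of `𝒞`. -/
noncomputable def latticeIdeal (K : Type*) [Field K] (C : Finset (ℤ × ℤ))
    (D : Set (ℤ × ℤ)) : Ideal (MvPolynomial {v // v ∈ verts C} K) :=
  Ideal.span {f | ∃ e ∈ cellLattice C D,
    f = (∏ w, X w ^ (e w).toNat) - ∏ w, X w ^ (-(e w)).toNat}

/-- `W ⊆ V(𝒞)` is admissible: for each cell `C ∈ 𝒞`, either `W ∩ C = ∅` or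
`W ∩ C` contains an edge of `C`. -/
def Admissible (C : Finset (ℤ × ℤ)) (W : Set (ℤ × ℤ)) : Prop :=
  W ⊆ ↑(verts C) ∧ ∀ a ∈ C, (∀ v ∈ cellVerts a, v ∉ W) ∨
    ∃ e ∈ cellEdges a, e.1 ∈ W ∧ e.2 ∈ W

/-- The subcollection `𝒞_W` of cells of `𝒞` disjoint from `W`. -/
def subcollW (C : Finset (ℤ × ℤ)) (W : Set (ℤ × ℤ)) : Set (ℤ × ℤ) :=
  {a | a ∈ C ∧ ∀ v ∈ cellVerts a, v ∉ W}

/-- The ideal `P_W(𝒞) = (x_w : w ∈ W) + L_{𝒞_W}`. -/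
noncomputable def PW (K : Type*) [Field K] (C : Finset (ℤ × ℤ))
    (W : Set (ℤ × ℤ)) : Ideal (MvPolynomial {v // v ∈ verts C} K) :=
  Ideal.span {f | ∃ v : {v // v ∈ verts C}, v.1 ∈ W ∧ f = X v} +
    latticeIdeal K C (subcollW C W)

/-- The height of an ideal: the infimum of `Order.height 𝔭` over the prime
ideals `𝔭` containing it (equivalently, over its minimal primes); for a prime
ideal this is just its height. -/
noncomputable def idealHeight {R : Type*} [CommRing R] (I : Ideal R) : ℕ∞ :=
  ⨅ p ∈ {p : PrimeSpectrum R | I ≤ p.asIdeal}, Order.height p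

/-- A collection of cells is weakly connected if any two of its cells are
joined by a sequence of cells of the collection in which consecutive cells
share at least one vertex. -/
def WeaklyConnected (C : Finset (ℤ × ℤ)) : Prop :=
  ∀ a ∈ C, ∀ b ∈ C, Relation.ReflTransGen
    (fun p q => p ∈ C ∧ q ∈ C ∧ ((cellVerts p ∩ cellVerts q).Nonempty)) a b

/-- `𝒞` contains a square tetromino. -/
def HasSquareTetromino (C : Finset (ℤ × ℤ)) : Prop :=
  ∃ a : ℤ × ℤ, a ∈ C ∧ a + (1, 0) ∈ C ∧ a + (0, 1) ∈ C ∧ a + (1, 1) ∈ C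

/-- `𝒞` contains an X-pentomino. -/
def HasXPentomino (C : Finset (ℤ × ℤ)) : Prop :=
  ∃ a : ℤ × ℤ, a ∈ C ∧ a + (1, 0) ∈ C ∧ a - (1, 0) ∈ C ∧
    a + (0, 1) ∈ C ∧ a - (0, 1) ∈ C

/-- Row convexity of a collection of cells. -/
def RowConvex (C : Finset (ℤ × ℤ)) : Prop :=
  ∀ a ∈ C, ∀ b ∈ C, a.2 = b.2 → ∀ r : ℤ, a.1 ≤ r → r ≤ b.1 → (r, a.2) ∈ C

/-- Column convexity of a collection of cells. -/
def ColConvex (C : Finset (ℤ × ℤ)) : Prop :=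
  ∀ a ∈ C, ∀ b ∈ C, a.1 = b.1 → ∀ s : ℤ, a.2 ≤ s → s ≤ b.2 → (a.1, s) ∈ C

section Dev
open MvPolynomial
variable (K : Type*) [Field K] (C : Finset (ℤ × ℤ))

/-- abbreviation for the vertex type -/
abbrev Vt := {v // v ∈ verts C}

noncomputable def mon (u : Vt C → ℕ) : MvPolynomial (Vt C) K := ∏ w, X w ^ u w

def ip (e : Vt C → ℤ) : Vt C → ℕ := fun w => (e w).toNat
def im (e : Vt C → ℤ) : Vt C → ℕ := fun w => (-(e w)).toNat

noncomputable def bin (e : Vt C → ℤ) : MvPolynomial (Vt C) K :=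
  mon K C (ip C e) - mon K C (im C e)

lemma latticeIdeal_eq (D : Set (ℤ × ℤ)) :
    latticeIdeal K C D = Ideal.span {f | ∃ e ∈ cellLattice C D, f = bin K C e} := rfl

lemma mon_add (u v : Vt C → ℕ) : mon K C (u + v) = mon K C u * mon K C v := by
  simp [mon, pow_add, Finset.prod_mul_distrib]

lemma mon_eq_monomial (u : Vt C → ℕ) :
    mon K C u = monomial (Finsupp.equivFunOnFinite.symm u) 1 := by
  rw [monomial_eq, map_one, one_mul, Finsupp.prod]
  refine (Finset.prod_subset (Finset.subset_univ _) ?_).symm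
  intro w _ hw
  have : u w = 0 := by simpa [Finsupp.mem_support_iff] using hw
  simp [mon, this]

lemma mon_pair (u v : Vt C) (huv : u ≠ v) (m : Vt C → ℕ) (hu : m u = 1) (hv : m v = 1)
    (h0 : ∀ w, w ≠ u → w ≠ v → m w = 0) : mon K C m = X u * X v := by
  rw [mon, ← Finset.prod_subset (Finset.subset_univ ({u, v} : Finset (Vt C)))]
  · rw [Finset.prod_pair huv, hu, hv, pow_one, pow_one]
  · intro w _ hw
    simp only [Finset.mem_insert, Finset.mem_singleton, not_or] at hw
    rw [h0 w hw.1 hw.2, pow_zero]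

end Dev
lemma shift_ne {s t : ℤ × ℤ} (h : s ≠ t) (a : ℤ × ℤ) : a + s ≠ a + t := by
  simpa using h

variable (K : Type*) [Field K] (C : Finset (ℤ × ℤ)) in
lemma bin_cellVec {a : ℤ × ℤ} (ha : a ∈ C) :
    bin K C (cellVec C a) =
      X ⟨a, mem_verts ha (corner_mem00 a)⟩ *
          X ⟨a + (1, 1), mem_verts ha (corner_mem11 a)⟩ -
        X ⟨a + (0, 1), mem_verts ha (corner_mem01 a)⟩ *
          X ⟨a + (1, 0), mem_verts ha (corner_mem10 a)⟩ := by
  have h1 : bin K C (cellVec C a) = mon K C (ip C (cellVec C a)) - mon K C (im C (cellVec C a)) := rfl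
  rw [h1]
  congr 1
  · apply mon_pair K C _ _ (by simp [Subtype.ext_iff, Prod.ext_iff])
    · simp [ip, cellVec, Prod.ext_iff]
    · simp [ip, cellVec, Prod.ext_iff]
    · intro w hw1 hw2
      have e1 : w.1 ≠ a := fun h => hw1 (Subtype.ext h)
      have e2 : w.1 ≠ a + (1,1) := fun h => hw2 (Subtype.ext h)
      simp only [ip, cellVec, if_neg e1, if_neg e2]
      split_ifs <;> simp
  · apply mon_pair K C _ _ (by simp [Subtype.ext_iff, Prod.ext_iff])
    · simp [im, cellVec, Prod.ext_iff]
    · simp [im, cellVec, Prod.ext_iff]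
    · intro w hw1 hw2
      have e1 : w.1 ≠ a + (0,1) := fun h => hw1 (Subtype.ext h)
      have e2 : w.1 ≠ a + (1,0) := fun h => hw2 (Subtype.ext h)
      simp only [im, cellVec, if_neg e1, if_neg e2]
      split_ifs <;> simp

variable (K : Type*) [Field K] (C : Finset (ℤ × ℤ)) in
lemma adjIdeal_le_latticeIdeal : adjIdeal K C ≤ latticeIdeal K C ↑C := by
  rw [adjIdeal, latticeIdeal_eq]
  apply Ideal.span_le.mpr
  rintro f ⟨a, ha, rfl⟩
  exact Ideal.subset_span ⟨cellVec C a,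
    AddSubgroup.subset_closure ⟨a, by simpa using ha, rfl⟩, (bin_cellVec K C ha).symm⟩
variable (C : Finset (ℤ × ℤ)) in
def cellFam : {a // a ∈ C} → (Vt C → ℤ) := fun a => cellVec C a.1

/-- the lattice as a ℤ-submodule -/
def LatZ (C : Finset (ℤ × ℤ)) : Submodule ℤ (Vt C → ℤ) :=
  Submodule.span ℤ (Set.range (cellFam C))

lemma mem_cellLattice_iff {C : Finset (ℤ × ℤ)} {x : Vt C → ℤ} :
    x ∈ cellLattice C ↑C ↔ x ∈ LatZ C := by
  have hs : {g | ∃ a ∈ (↑C : Set (ℤ × ℤ)), g = cellVec C a} = Set.range (cellFam C) := by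
    ext g
    constructor
    · rintro ⟨a, ha, rfl⟩; exact ⟨⟨a, ha⟩, rfl⟩
    · rintro ⟨a, rfl⟩; exact ⟨a.1, a.2, rfl⟩
  rw [cellLattice, hs, ← Submodule.span_int_eq_addSubgroupClosure]
  rfl

/-- lexicographic order on ℤ × ℤ -/
def plt (p q : ℤ × ℤ) : Prop := p.1 < q.1 ∨ (p.1 = q.1 ∧ p.2 < q.2)

instance (p : ℤ × ℤ) : DecidablePred (plt p) := fun q => by unfold plt; infer_instance

lemma plt_trans {p q r : ℤ × ℤ} (h1 : plt p q) (h2 : plt q r) : plt p r := by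
  unfold plt at *; omega

lemma plt11 (a : ℤ × ℤ) : plt a (a + (1,1)) := Or.inl (by simp [Prod.fst_add])
lemma plt01 (a : ℤ × ℤ) : plt a (a + (0,1)) := Or.inr (by simp [Prod.fst_add, Prod.snd_add])
lemma plt10 (a : ℤ × ℤ) : plt a (a + (1,0)) := Or.inl (by simp [Prod.fst_add])

lemma card_filter_plt_lt {C : Finset (ℤ × ℤ)} {b b' : ℤ × ℤ} (hb' : b' ∈ C) (h : plt b b') :
    (C.filter (fun t => plt b' t)).card < (C.filter (fun t => plt b t)).card := by
  apply Finset.card_lt_card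
  constructor
  · intro t ht
    simp only [Finset.mem_filter] at *
    exact ⟨ht.1, plt_trans h ht.2⟩
  · intro hsub
    have : b' ∈ C.filter (fun t => plt b t) := Finset.mem_filter.mpr ⟨hb', h⟩
    have := hsub this
    simp only [Finset.mem_filter] at this
    unfold plt at this; omega

section EvalLemma
variable {C : Finset (ℤ × ℤ)} (c : {a // a ∈ C} → ℤ)

/-- extension of coefficients by zero -/
def ctil : ℤ × ℤ → ℤ := fun t => if h : t ∈ C then c ⟨t, h⟩ else 0

lemma sum_indicator (t s : ℤ × ℤ) :
    ∑ a : {a // a ∈ C}, c a * (if t = a.1 + s then 1 else 0) = ctil c (t - s) := by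
  by_cases h : t - s ∈ C
  · have hiff : ∀ a : {a // a ∈ C}, (t = a.1 + s) ↔ (a = ⟨t - s, h⟩) := by
      intro a
      rw [Subtype.ext_iff]
      constructor
      · intro h'; exact (eq_sub_of_add_eq h'.symm)
      · intro h'; rw [h', sub_add_cancel]
    calc ∑ a : {a // a ∈ C}, c a * (if t = a.1 + s then 1 else 0)
        = ∑ a : {a // a ∈ C}, (if a = ⟨t - s, h⟩ then c a else 0) := by
          refine Finset.sum_congr rfl (fun a _ => ?_)
          rw [if_congr (hiff a) rfl rfl]
          split_ifs <;> simp
      _ = c ⟨t - s, h⟩ := by simp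
      _ = ctil c (t - s) := by rw [ctil, dif_pos h]
  · rw [ctil, dif_neg h]
    apply Finset.sum_eq_zero
    intro a _
    have : t ≠ a.1 + s := by
      intro h'
      exact h (by simpa [h', add_sub_cancel_right] using a.2)
    simp [this]

lemma eval_sum_cellFam (w : Vt C) :
    (∑ a, c a • cellFam C a) w =
      ctil c w.1 + ctil c (w.1 - (1,1)) - ctil c (w.1 - (0,1)) - ctil c (w.1 - (1,0)) := by
  rw [Finset.sum_apply]
  have expand : ∀ a : {a // a ∈ C}, (c a • cellFam C a) w =
      c a * (if w.1 = a.1 then 1 else 0) + c a * (if w.1 = a.1 + (1,1) then 1 else 0)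
      - c a * (if w.1 = a.1 + (0,1) then 1 else 0) - c a * (if w.1 = a.1 + (1,0) then 1 else 0) := by
    intro a
    simp only [Pi.smul_apply, smul_eq_mul, cellFam, cellVec]
    ring
  rw [Finset.sum_congr rfl (fun a _ => expand a)]
  rw [Finset.sum_sub_distrib, Finset.sum_sub_distrib, Finset.sum_add_distrib]
  rw [sum_indicator c w.1 (1,1), sum_indicator c w.1 (0,1), sum_indicator c w.1 (1,0)]
  have h0 : ∑ a : {a // a ∈ C}, c a * (if w.1 = a.1 then 1 else 0) = ctil c w.1 := by
    have := sum_indicator c w.1 0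
    simpa using this
  rw [h0]

end EvalLemma
section Saturation
variable {C : Finset (ℤ × ℤ)}

lemma div_all (c : {a // a ∈ C} → ℤ) {n : ℤ} {x : Vt C → ℤ}
    (hsum : ∑ a, c a • cellFam C a = n • x) :
    ∀ (k : ℕ) (b : ℤ × ℤ), (C.filter (fun t => plt b t)).card ≤ k → n ∣ ctil c b := by
  intro k
  induction k using Nat.strong_induction_on with
  | _ k ih =>
    intro b hcard
    by_cases hb : b ∈ C
    · have hdiv : ∀ b', plt b b' → n ∣ ctil c b' := by
        intro b' hlt
        by_cases h' : b' ∈ C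
        · have hlt2 := card_filter_plt_lt (C := C) h' hlt
          exact ih (C.filter (fun t => plt b' t)).card (by omega) b' le_rfl
        · simp [ctil, h']
      set w : Vt C := ⟨b + (1,1), mem_verts hb (corner_mem11 b)⟩ with hw
      have heq := eval_sum_cellFam c w
      rw [hsum] at heq
      have hw1 : w.1 = b + (1,1) := rfl
      have e1 : b + (1,1) - (1,1) = b := by simp
      have e2 : b + (1,1) - (0,1) = b + (1,0) := by simp [Prod.ext_iff]
      have e3 : b + (1,1) - (1,0) = b + (0,1) := by simp [Prod.ext_iff]
      rw [hw1, e1, e2, e3] at heq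
      have hnx : (n • x) w = n * x w := rfl
      rw [hnx] at heq
      have hb0 : ctil c b = n * x w - ctil c (b + (1,1)) + ctil c (b + (1,0)) + ctil c (b + (0,1)) := by
        linarith
      rw [hb0]
      exact dvd_add (dvd_add (dvd_sub (dvd_mul_right n _) (hdiv _ (plt11 b)))
        (hdiv _ (plt10 b))) (hdiv _ (plt01 b))
    · simp [ctil, hb]

lemma sat {n : ℤ} (hn : n ≠ 0) {x : Vt C → ℤ} (h : n • x ∈ LatZ C) : x ∈ LatZ C := by
  rw [LatZ, Submodule.mem_span_range_iff_exists_fun] at h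
  obtain ⟨c, hc⟩ := h
  have hdiv : ∀ a : {a // a ∈ C}, n ∣ c a := by
    intro a
    have := div_all c hc (C.filter (fun t => plt a.1 t)).card a.1 le_rfl
    simpa [ctil, a.2] using this
  choose q hq using hdiv
  have hx : x = ∑ a, q a • cellFam C a := by
    have h2 : n • x = n • ∑ a, q a • cellFam C a := by
      rw [← hc, Finset.smul_sum]
      refine Finset.sum_congr rfl (fun a _ => ?_)
      rw [smul_smul, ← hq a]
    funext w
    have h3 : n * x w = n * (∑ a, q a • cellFam C a) w := by
      have := congrFun h2 w
      simpa using this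
    exact mul_left_cancel₀ hn h3
  rw [hx, LatZ]
  exact Submodule.sum_mem _ (fun a _ =>
    Submodule.smul_mem _ _ (Submodule.subset_span ⟨a, rfl⟩))

end Saturation
section Theta
variable (C : Finset (ℤ × ℤ))

abbrev Qt := (Vt C → ℤ) ⧸ LatZ C

instance : Module.Finite ℤ (Qt C) := Module.Finite.quotient ℤ _

instance : NoZeroSMulDivisors ℤ (Qt C) := by
  refine ⟨fun {n} {y} h => ?_⟩
  by_cases hn : n = 0
  · exact Or.inl hn
  · refine Or.inr ?_
    obtain ⟨x, rfl⟩ := Submodule.Quotient.mk_surjective _ y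
    rw [← Submodule.Quotient.mk_smul, Submodule.Quotient.mk_eq_zero] at h
    rw [Submodule.Quotient.mk_eq_zero]
    exact sat hn h

instance : Module.Free ℤ (Qt C) := Module.free_of_finite_type_torsion_free'

/-- index type for a basis of the quotient -/
abbrev BI := Module.Free.ChooseBasisIndex ℤ (Qt C)

noncomputable def theta : (Vt C → ℤ) →ₗ[ℤ] (BI C →₀ ℤ) :=
  (Module.Free.chooseBasis ℤ (Qt C)).repr.toLinearMap.comp (LatZ C).mkQ

lemma theta_eq_zero_iff {C : Finset (ℤ × ℤ)} (x : Vt C → ℤ) :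
    theta C x = 0 ↔ x ∈ LatZ C := by
  rw [theta]
  simp only [LinearMap.comp_apply, LinearEquiv.coe_coe]
  rw [map_eq_zero_iff _ (Module.Free.chooseBasis ℤ (Qt C)).repr.injective]
  rw [← Submodule.Quotient.mk_eq_zero]
  rfl

end Theta
section Phi
variable (K : Type*) [Field K] (C : Finset (ℤ × ℤ))

abbrev Ff := FractionRing (MvPolynomial (BI C) K)

lemma algX_ne_zero (i : BI C) :
    algebraMap (MvPolynomial (BI C) K) (Ff K C) (X i) ≠ 0 := by
  intro h
  exact MvPolynomial.X_ne_zero i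
    (IsFractionRing.injective (MvPolynomial (BI C) K) (Ff K C) (by rw [h, map_zero]))

noncomputable def zXu (i : BI C) : (Ff K C)ˣ :=
  Units.mk0 _ (algX_ne_zero K C i)

noncomputable def laurU : (BI C →₀ ℤ) →+ Additive (Ff K C)ˣ :=
  Finsupp.liftAddHom (fun i => zmultiplesHom _ (Additive.ofMul (zXu K C i)))

noncomputable def chiU : (Vt C → ℤ) →+ Additive (Ff K C)ˣ :=
  (laurU K C).comp (theta C).toAddMonoidHom

noncomputable def vF (x : Vt C → ℤ) : Ff K C := ((chiU K C x).toMul : (Ff K C)ˣ)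

lemma vF_ne_zero (x : Vt C → ℤ) : vF K C x ≠ 0 := Units.ne_zero _

lemma vF_add (x y : Vt C → ℤ) : vF K C (x + y) = vF K C x * vF K C y := by
  rw [vF, vF, vF, map_add, toMul_add, Units.val_mul]

lemma vF_nsmul (n : ℕ) (x : Vt C → ℤ) : vF K C (n • x) = vF K C x ^ n := by
  rw [vF, vF, map_nsmul, toMul_nsmul, Units.val_pow_eq_pow_val]

lemma vF_sum {α : Type*} (s : Finset α) (g : α → (Vt C → ℤ)) :
    vF K C (∑ i ∈ s, g i) = ∏ i ∈ s, vF K C (g i) := by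
  classical
  induction s using Finset.cons_induction with
  | empty => simp [vF, map_zero]
  | cons a s ha ih =>
    rw [Finset.sum_cons, Finset.prod_cons, vF_add, ih]

lemma vF_lattice {x : Vt C → ℤ} (h : x ∈ LatZ C) : vF K C x = 1 := by
  have ht : theta C x = 0 := (theta_eq_zero_iff x).mpr h
  rw [vF, chiU]
  simp only [AddMonoidHom.comp_apply, LinearMap.toAddMonoidHom_coe, ht, map_zero]
  rfl

noncomputable def phi : MvPolynomial (Vt C) K →ₐ[K] Ff K C :=
  aeval (fun w => vF K C (Pi.single w 1))

lemma phi_mon (u : Vt C → ℕ) :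
    phi K C (mon K C u) = vF K C (fun w => (u w : ℤ)) := by
  rw [mon, map_prod]
  have step : ∀ w : Vt C, phi K C (X w ^ u w) = vF K C ((u w : ℤ) • Pi.single w (1:ℤ)) := by
    intro w
    rw [map_pow, phi, aeval_X, natCast_zsmul, vF_nsmul]
  rw [Finset.prod_congr rfl (fun w _ => step w), ← vF_sum]
  congr 1
  funext v
  rw [Finset.sum_apply]
  have : ∀ w : Vt C, ((u w : ℤ) • (Pi.single w (1:ℤ) : Vt C → ℤ)) v = (Pi.single w (u w : ℤ) : Vt C → ℤ) v := by
    intro w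
    by_cases h : v = w <;> simp [Pi.single_apply, h]
  rw [Finset.sum_congr rfl (fun w _ => this w), ← Finset.sum_apply]
  rw [Finset.univ_sum_single (fun w => ((u w : ℤ)))]

lemma ipZ_eq (e : Vt C → ℤ) :
    (fun w => ((ip C e w : ℤ))) = e + (fun w => ((im C e w : ℤ))) := by
  funext w
  simp only [ip, im, Pi.add_apply]
  omega

lemma latticeIdeal_le_ker :
    latticeIdeal K C ↑C ≤ RingHom.ker (phi K C).toRingHom := by
  rw [latticeIdeal_eq]
  apply Ideal.span_le.mpr
  rintro f ⟨e, he, rfl⟩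
  have he' : e ∈ LatZ C := mem_cellLattice_iff.mp he
  simp only [SetLike.mem_coe, RingHom.mem_ker, AlgHom.toRingHom_eq_coe, RingHom.coe_coe]
  rw [bin, map_sub, phi_mon, phi_mon, ipZ_eq, vF_add, vF_lattice K C he', one_mul, sub_self]

end Phi
section Ker
variable (K : Type*) [Field K] (C : Finset (ℤ × ℤ))

noncomputable def valU (y : BI C →₀ ℤ) : Ff K C := ((laurU K C y).toMul : (Ff K C)ˣ)

lemma vF_eq_valU (x : Vt C → ℤ) : vF K C x = valU K C (theta C x) := rfl

lemma valU_eq (y : BI C →₀ ℤ) :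
    valU K C y = ∏ i, (algebraMap (MvPolynomial (BI C) K) (Ff K C) (X i)) ^ (y i) := by
  rw [valU, laurU, Finsupp.liftAddHom_apply]
  rw [Finsupp.sum, toMul_sum]
  show (Units.coeHom (Ff K C)) _ = _
  rw [map_prod]
  simp only [Units.coeHom_apply]
  rw [← Finset.prod_subset (Finset.subset_univ y.support)]
  · refine Finset.prod_congr rfl (fun i _ => ?_)
    rw [zmultiplesHom_apply, toMul_zsmul, toMul_ofMul, Units.val_zpow_eq_zpow_val]
    rfl
  · intro i _ hi
    have h0 : y i = 0 := by simpa [Finsupp.mem_support_iff] using hi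
    rw [h0, zpow_zero]

lemma prod_X_pow_eq {σ : Type*} [Fintype σ] [DecidableEq σ] {R : Type*} [CommSemiring R]
    (m : σ → ℕ) :
    (∏ i, (X i : MvPolynomial σ R) ^ m i) = monomial (Finsupp.equivFunOnFinite.symm m) 1 := by
  rw [monomial_eq, map_one, one_mul, Finsupp.prod]
  refine (Finset.prod_subset (Finset.subset_univ _) ?_).symm
  intro w _ hw
  have : m w = 0 := by simpa [Finsupp.mem_support_iff] using hw
  simp [this]

noncomputable def toNN (y : BI C →₀ ℤ) (N : BI C → ℕ) : BI C →₀ ℕ :=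
  Finsupp.equivFunOnFinite.symm (fun i => (y i + N i).toNat)

lemma Mkey (y : BI C →₀ ℤ) (N : BI C → ℕ) (hy : ∀ i, 0 ≤ y i + N i) :
    valU K C y * algebraMap (MvPolynomial (BI C) K) (Ff K C) (∏ i, X i ^ N i) =
      algebraMap (MvPolynomial (BI C) K) (Ff K C) (monomial (toNN C y N) 1) := by
  rw [valU_eq, map_prod, ← Finset.prod_mul_distrib]
  have step : ∀ i : BI C,
      (algebraMap (MvPolynomial (BI C) K) (Ff K C) (X i)) ^ (y i) *
        algebraMap (MvPolynomial (BI C) K) (Ff K C) (X i ^ N i) =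
      (algebraMap (MvPolynomial (BI C) K) (Ff K C) (X i)) ^ ((y i + N i).toNat) := by
    intro i
    rw [map_pow, ← zpow_natCast (algebraMap (MvPolynomial (BI C) K) (Ff K C) (X i)) (N i),
      ← zpow_add₀ (algX_ne_zero K C i), ← zpow_natCast (algebraMap _ _ (X i)) ((y i + N i).toNat),
      Int.toNat_of_nonneg (hy i)]
  rw [Finset.prod_congr rfl (fun i _ => step i)]
  simp only [← map_pow]
  rw [← map_prod, prod_X_pow_eq]
  rfl

/-- integer vector of a monomial exponent -/
def ivd {C : Finset (ℤ × ℤ)} (d : Vt C →₀ ℕ) : Vt C → ℤ := fun w => (d w : ℤ)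

lemma phi_monomial (d : Vt C →₀ ℕ) (c : K) :
    phi K C (monomial d c) = algebraMap K (Ff K C) c * vF K C (ivd d) := by
  have h1 : monomial d c = MvPolynomial.C c * mon K C ⇑d := by
    rw [mon_eq_monomial, Finsupp.equivFunOnFinite_symm_coe, C_mul_monomial, mul_one]
  rw [h1, map_mul, phi_mon]
  congr 1
  exact (phi K C).commutes c

lemma mon_sub_mon_mem {d d0 : Vt C →₀ ℕ} (h : theta C (ivd d) = theta C (ivd d0)) :
    mon K C ⇑d - mon K C ⇑d0 ∈ latticeIdeal K C ↑C := by
  set e : Vt C → ℤ := ivd d - ivd d0 with he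
  have hee : e ∈ LatZ C := by
    rw [← theta_eq_zero_iff, he, map_sub, h, sub_self]
  set m : Vt C → ℕ := fun w => min (d w) (d0 w) with hm
  have h1 : ⇑d = m + ip C e := by
    funext w
    simp only [hm, Pi.add_apply, ip, he, Pi.sub_apply, ivd]
    omega
  have h2 : ⇑d0 = m + im C e := by
    funext w
    simp only [hm, Pi.add_apply, im, he, Pi.sub_apply, ivd]
    omega
  have : mon K C ⇑d - mon K C ⇑d0 = mon K C m * bin K C e := by
    rw [h1, h2, mon_add, mon_add, bin, mul_sub]
  rw [this, latticeIdeal_eq]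
  exact Ideal.mul_mem_left _ _
    (Ideal.subset_span ⟨e, mem_cellLattice_iff.mpr hee, rfl⟩)

lemma fiber_sum (f : MvPolynomial (Vt C) K) (hker : phi K C f = 0) (d0 : Vt C →₀ ℕ) (hd0 : d0 ∈ f.support) :
    ∑ d ∈ f.support.filter
      (fun d => theta C (ivd d) = theta C (ivd (C := C) d0)), coeff d f = 0 := by
  classical
  set T := f.support with hT
  set y : (Vt C →₀ ℕ) → (BI C →₀ ℤ) := fun d => theta C (ivd d) with hy
  set N : BI C → ℕ := fun i => T.sup (fun d => (-(y d i)).toNat) with hN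
  have hNd : ∀ d ∈ T, ∀ i, 0 ≤ y d i + N i := by
    intro d hd i
    have : (-(y d i)).toNat ≤ N i := Finset.le_sup (f := fun d => (-(y d i)).toNat) hd
    omega
  -- main equation in the fraction field
  have hphi : ∑ d ∈ T, algebraMap K (Ff K C) (coeff d f) * valU K C (y d) = 0 := by
    rw [← hker]
    conv_rhs => rw [f.as_sum]
    rw [map_sum]
    exact (Finset.sum_congr rfl (fun d _ => by rw [phi_monomial, vF_eq_valU])).symm
  have hmul := congrArg (· * algebraMap (MvPolynomial (BI C) K) (Ff K C) (∏ i, X i ^ N i)) hphi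
  simp only [Finset.sum_mul, zero_mul] at hmul
  have hstep : ∀ d ∈ T,
      algebraMap K (Ff K C) (coeff d f) * valU K C (y d) *
        algebraMap (MvPolynomial (BI C) K) (Ff K C) (∏ i, X i ^ N i) =
      algebraMap (MvPolynomial (BI C) K) (Ff K C) (monomial (toNN C (y d) N) (coeff d f)) := by
    intro d hd
    rw [mul_assoc, Mkey K C (y d) N (hNd d hd)]
    rw [IsScalarTower.algebraMap_apply K (MvPolynomial (BI C) K) (Ff K C), ← map_mul]
    rw [algebraMap_eq, C_mul_monomial, mul_one]
  rw [Finset.sum_congr rfl hstep, ← map_sum] at hmul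
  have hker2 : ∑ d ∈ T, monomial (toNN C (y d) N) (coeff d f) = 0 :=
    IsFractionRing.injective (MvPolynomial (BI C) K) (Ff K C) (by rw [hmul, map_zero])
  have hco := congrArg (coeff (toNN C (y d0) N)) hker2
  rw [coeff_sum, coeff_zero] at hco
  simp only [coeff_monomial] at hco
  rw [Finset.sum_ite, Finset.sum_const_zero, add_zero] at hco
  rw [← hco]
  apply Finset.sum_congr
  · apply Finset.filter_congr
    intro d hd
    constructor
    · intro h; rw [show y d = y d0 from h]
    · intro h
      ext i
      have h1 := congrFun (congrArg (fun (g : BI C →₀ ℕ) => (g : BI C → ℕ)) h) i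
      simp only [toNN, Finsupp.coe_equivFunOnFinite_symm] at h1
      have n1 := hNd d hd i
      have n2 := hNd d0 hd0 i
      show y d i = y d0 i
      omega
  · intros; rfl
lemma ker_le_aux :
    ∀ (n : ℕ) (f : MvPolynomial (Vt C) K), f.support.card ≤ n →
      phi K C f = 0 → f ∈ latticeIdeal K C ↑C := by
  intro n
  induction n with
  | zero =>
    intro f hcard _
    have : f.support = ∅ := Finset.card_eq_zero.mp (Nat.le_zero.mp hcard)
    rw [MvPolynomial.support_eq_empty.mp this]
    exact Ideal.zero_mem _
  | succ n ih =>
    intro f hcard hker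
    classical
    by_cases hf0 : f = 0
    · rw [hf0]; exact Ideal.zero_mem _
    obtain ⟨d0, hd0⟩ := MvPolynomial.support_nonempty.mpr hf0
    set T := f.support with hT
    set p : (Vt C →₀ ℕ) → Prop := fun d => theta C (ivd d) = theta C (ivd (C := C) d0) with hp
    set h : MvPolynomial (Vt C) K := ∑ d ∈ T.filter p, monomial d (coeff d f) with hh
    have hsum0 : ∑ d ∈ T.filter p, coeff d f = 0 := fiber_sum K C f hker d0 hd0
    have hmemh : h ∈ latticeIdeal K C ↑C := by
      have hrw : h = ∑ d ∈ T.filter p,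
          MvPolynomial.C (coeff d f) * (mon K C ⇑d - mon K C ⇑d0) := by
        rw [Finset.sum_congr rfl (fun d _ => by rw [mul_sub] : ∀ d ∈ T.filter p,
          MvPolynomial.C (coeff d f) * (mon K C ⇑d - mon K C ⇑d0) =
            MvPolynomial.C (coeff d f) * mon K C ⇑d - MvPolynomial.C (coeff d f) * mon K C ⇑d0)]
        rw [Finset.sum_sub_distrib, ← Finset.sum_mul, ← map_sum, hsum0, map_zero, zero_mul,
          sub_zero, hh]
        refine Finset.sum_congr rfl (fun d _ => ?_)
        rw [mon_eq_monomial, Finsupp.equivFunOnFinite_symm_coe, C_mul_monomial, mul_one]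
      rw [hrw]
      refine Ideal.sum_mem _ (fun d hd => ?_)
      have hpd : p d := (Finset.mem_filter.mp hd).2
      exact Ideal.mul_mem_left _ _ (mon_sub_mon_mem K C hpd)
    set g : MvPolynomial (Vt C) K := ∑ d ∈ T.filter (fun d => ¬ p d), monomial d (coeff d f)
      with hg
    have hfg : f = g + h := by
      rw [hg, hh]
      conv_lhs => rw [f.as_sum]
      rw [← hT, ← Finset.sum_filter_add_sum_filter_not T p]
      ring
    have hgsupp : g.support ⊆ T.filter (fun d => ¬ p d) := by
      refine (MvPolynomial.support_sum).trans ?_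
      intro d hd
      simp only [Finset.mem_biUnion] at hd
      obtain ⟨d', hd', hmem⟩ := hd
      have := MvPolynomial.support_monomial_subset hmem
      simp only [Finset.mem_singleton] at this
      rwa [this]
    have hcard2 : g.support.card ≤ n := by
      have h1 : (T.filter p).card + (T.filter (fun d => ¬ p d)).card = T.card :=
        Finset.card_filter_add_card_filter_not (fun d => p d)
      have h2 : 0 < (T.filter p).card := by
        refine Finset.card_pos.mpr ⟨d0, Finset.mem_filter.mpr ⟨hd0, rfl⟩⟩
      have h3 := Finset.card_le_card hgsupp
      omega
    have hgker : phi K C g = 0 := by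
      have hh0 : phi K C h = 0 := by
        have := latticeIdeal_le_ker K C hmemh
        simpa [RingHom.mem_ker] using this
      have := congrArg (phi K C) hfg
      rw [map_add, hker] at this
      rw [hh0, add_zero] at this
      exact this.symm
    have hgmem : g ∈ latticeIdeal K C ↑C := ih g hcard2 hgker
    rw [hfg]
    exact Ideal.add_mem _ hgmem hmemh

lemma ker_eq_latticeIdeal :
    RingHom.ker (phi K C).toRingHom = latticeIdeal K C ↑C := by
  refine le_antisymm ?_ (latticeIdeal_le_ker K C)
  intro f hf
  exact ker_le_aux K C f.support.card f le_rfl (by simpa [RingHom.mem_ker] using hf)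

lemma latticeIdeal_isPrime : (latticeIdeal K C ↑C).IsPrime := by
  rw [← ker_eq_latticeIdeal]
  exact RingHom.ker_isPrime _

lemma X_not_mem_latticeIdeal (w : Vt C) : (X w : MvPolynomial (Vt C) K) ∉ latticeIdeal K C ↑C := by
  rw [← ker_eq_latticeIdeal]
  intro hmem
  rw [RingHom.mem_ker] at hmem
  have : phi K C (X w) = vF K C (Pi.single w 1) := by rw [phi, aeval_X]
  exact vF_ne_zero K C _ (by rw [← this]; exact hmem)

end Ker
section Min
variable (K : Type*) [Field K] (C : Finset (ℤ × ℤ))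

noncomputable def xall : MvPolynomial (Vt C) K := ∏ w, X w

def Jm (f : MvPolynomial (Vt C) K) : Prop := ∃ k : ℕ, xall K C ^ k * f ∈ adjIdeal K C

lemma xall_pow (k : ℕ) : xall K C ^ k = mon K C (fun _ => k) := by
  rw [xall, mon, ← Finset.prod_pow]

lemma Jm_of_mem {f} (h : f ∈ adjIdeal K C) : Jm K C f := ⟨0, by simpa using h⟩

lemma Jm_zero : Jm K C 0 := ⟨0, by rw [mul_zero]; exact Ideal.zero_mem _⟩

lemma Jm_neg {f} (h : Jm K C f) : Jm K C (-f) := by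
  obtain ⟨k, hk⟩ := h
  exact ⟨k, by rw [mul_neg]; exact Submodule.neg_mem _ hk⟩

lemma Jm_mul (r : MvPolynomial (Vt C) K) {f} (h : Jm K C f) : Jm K C (r * f) := by
  obtain ⟨k, hk⟩ := h
  refine ⟨k, ?_⟩
  have : xall K C ^ k * (r * f) = r * (xall K C ^ k * f) := by ring
  rw [this]
  exact Ideal.mul_mem_left _ _ hk

lemma Jm_add {f g} (hf : Jm K C f) (hg : Jm K C g) : Jm K C (f + g) := by
  obtain ⟨k1, hk1⟩ := hf
  obtain ⟨k2, hk2⟩ := hg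
  refine ⟨k1 + k2, ?_⟩
  have : xall K C ^ (k1 + k2) * (f + g) =
      xall K C ^ k2 * (xall K C ^ k1 * f) + xall K C ^ k1 * (xall K C ^ k2 * g) := by ring
  rw [this]
  exact Ideal.add_mem _ (Ideal.mul_mem_left _ _ hk1) (Ideal.mul_mem_left _ _ hk2)

lemma Jm_of_mon_mul {m : Vt C → ℕ} {f} (h : Jm K C (mon K C m * f)) : Jm K C f := by
  obtain ⟨k, hk⟩ := h
  set Nn : ℕ := ∑ w, m w with hNn
  have hb : ∀ w, m w ≤ Nn := fun w =>
    Finset.single_le_sum (fun _ _ => Nat.zero_le _) (Finset.mem_univ w)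
  have hdiv : mon K C (fun _ => Nn) = mon K C m * mon K C (fun w => Nn - m w) := by
    rw [← mon_add]
    congr 1
    funext w
    have := hb w
    simp only [Pi.add_apply]
    omega
  refine ⟨k + Nn, ?_⟩
  have : xall K C ^ (k + Nn) * f =
      mon K C (fun w => Nn - m w) * (xall K C ^ k * (mon K C m * f)) := by
    rw [pow_add, xall_pow K C Nn, hdiv]
    ring
  rw [this]
  exact Ideal.mul_mem_left _ _ hk

def sfun (e1 e2 : Vt C → ℤ) : Vt C → ℕ := fun w => ip C e1 w + ip C e2 w - ip C (e1 + e2) w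

lemma bin_add_identity (e1 e2 : Vt C → ℤ) :
    mon K C (im C e2) * bin K C e1 + mon K C (ip C e1) * bin K C e2 =
      mon K C (sfun C e1 e2) * bin K C (e1 + e2) := by
  have hA : sfun C e1 e2 + ip C (e1 + e2) = ip C e1 + ip C e2 := by
    funext w
    simp only [sfun, ip, Pi.add_apply]
    omega
  have hB : sfun C e1 e2 + im C (e1 + e2) = im C e1 + im C e2 := by
    funext w
    simp only [sfun, ip, im, Pi.add_apply]
    omega
  simp only [bin, mul_sub]
  rw [← mon_add, ← mon_add, ← mon_add, ← mon_add, ← mon_add, ← mon_add, hA, hB]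
  have c1 : im C e2 + ip C e1 = ip C e1 + im C e2 := by rw [add_comm]
  have c2 : im C e2 + im C e1 = im C e1 + im C e2 := by rw [add_comm]
  have c3 : ip C e1 + ip C e2 = ip C e1 + ip C e2 := rfl
  rw [c1, c2]
  ring

lemma bin_neg (e : Vt C → ℤ) : bin K C (-e) = - bin K C e := by
  have h1 : ip C (-e) = im C e := rfl
  have h2 : im C (-e) = ip C e := by
    funext w
    simp [ip, im]
  rw [bin, bin, h1, h2]
  ring

lemma Jm_bin (e : Vt C → ℤ) (he : e ∈ cellLattice C ↑C) : Jm K C (bin K C e) := by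
  refine AddSubgroup.closure_induction ?_ ?_ ?_ ?_ he
  · rintro x ⟨a, ha, rfl⟩
    refine Jm_of_mem K C ?_
    rw [bin_cellVec K C ha]
    exact Ideal.subset_span ⟨a, ha, rfl⟩
  · have : bin K C 0 = 0 := by
      rw [bin]
      have : ip C 0 = im C 0 := by funext w; simp [ip, im]
      rw [this, sub_self]
    rw [this]
    exact Jm_zero K C
  · intro x y _ _ ihx ihy
    have hid := bin_add_identity K C x y
    have : Jm K C (mon K C (sfun C x y) * bin K C (x + y)) := by
      rw [← hid]
      exact Jm_add K C (Jm_mul K C _ ihx) (Jm_mul K C _ ihy)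
    exact Jm_of_mon_mul K C this
  · intro x _ ihx
    rw [bin_neg]
    exact Jm_neg K C ihx

lemma xall_not_mem_latticeIdeal : xall K C ∉ latticeIdeal K C ↑C := by
  rw [xall]
  refine Finset.prod_induction _ (fun f => f ∉ latticeIdeal K C ↑C) ?_ ?_ ?_
  · intro a b ha hb hab
    rcases (latticeIdeal_isPrime K C).mem_or_mem hab with h | h
    exacts [ha h, hb h]
  · intro h1
    exact (latticeIdeal_isPrime K C).ne_top (Ideal.eq_top_iff_one _ |>.mpr h1)
  · intro w _
    exact X_not_mem_latticeIdeal K C w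

end Min
/-- The lattice ideal `L_𝒞` is a minimal prime of the adjacent
2-minor ideal `I_adj(𝒞)`. -/
theorem stmt_0 (K : Type*) [Field K] (C : Finset (ℤ × ℤ)) (hC : C.Nonempty) :
    latticeIdeal K C ↑C ∈ (adjIdeal K C).minimalPrimes := by
  constructor
  · exact ⟨latticeIdeal_isPrime K C, adjIdeal_le_latticeIdeal K C⟩
  · rintro J ⟨hJp, hIJ⟩ hJL
    rw [latticeIdeal_eq]
    apply Ideal.span_le.mpr
    rintro f ⟨e, he, rfl⟩
    obtain ⟨k, hk⟩ := Jm_bin K C e he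
    have hxnot : xall K C ^ k ∉ J := by
      intro hmem
      exact xall_not_mem_latticeIdeal K C (hJL (hJp.mem_of_pow_mem k hmem))
    exact (hJp.mem_or_mem (hIJ hk)).resolve_left hxnot
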